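/- Let Δ̄ be the 'twisted' Laplace operator Δ̄ = −Σ_{i=1}^{n₁} x_i∂_{y_i} + Σ_{r=n₁+1}^{n₂} ∂_{x_r}∂_{y_r} − Σ_{s=n₂+1}^n y_s∂_{x_s} and η̄ = Σ_{i=1}^{n₁} y_i∂_{x_i} + Σ_{r=n₁+1}^{n₂} x_r y_r + Σ_{s=n₂+1}^n x_s∂_{y_s} (multiplication and derivation operators on ℂ[x_1,...,x_n,y_1,...,y_n]), where 1 ≤ n₁ < n₁+1 < n₂ ≤ n. Then Δ̄∘η̄ − η̄∘Δ̄ = (n₂ − n₁)·Id + ♭ + ♭′, where ♭ = Σ_{r=n₁+1}^n x_r∂_{x_r} − Σ_{i=1}^{n₁} x_i∂_{x_i} and ♭′ = Σ_{i=1}^{n₂} y_i∂_{y_i} − Σ_{r=n₂+1}^n y_r∂_{y_r}. -/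

import Mathlib

open MvPolynomial

noncomputable section

abbrev PolyA (n : ℕ) := MvPolynomial (Fin n ⊕ Fin n) ℂ

variable (n : ℕ)

def xv (i : Fin n) : PolyA n := X (Sum.inl i)
def yv (i : Fin n) : PolyA n := X (Sum.inr i)
def pdx (i : Fin n) : Module.End ℂ (PolyA n) :=
  (pderiv (Sum.inl i) : Derivation ℂ (PolyA n) (PolyA n)).toLinearMap
def pdy (i : Fin n) : Module.End ℂ (PolyA n) :=
  (pderiv (Sum.inr i) : Derivation ℂ (PolyA n) (PolyA n)).toLinearMap
def mx (i : Fin n) : Module.End ℂ (PolyA n) := LinearMap.mulLeft ℂ (xv n i)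
def my (i : Fin n) : Module.End ℂ (PolyA n) := LinearMap.mulLeft ℂ (yv n i)

lemma sum_commutator {R ι : Type*} [Ring R] (s : Finset ι) (a b : ι → R)
    (h : ∀ i ∈ s, ∀ j ∈ s, i ≠ j → Commute (a i) (b j)) :
    (∑ i ∈ s, a i) * (∑ j ∈ s, b j) - (∑ j ∈ s, b j) * (∑ i ∈ s, a i)
      = ∑ i ∈ s, (a i * b i - b i * a i) := by
  rw [Finset.sum_mul_sum, Finset.sum_mul_sum,
    Finset.sum_comm (s := s) (t := s) (f := fun j i => b j * a i), ← Finset.sum_sub_distrib]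
  refine Finset.sum_congr rfl fun i hi => ?_
  rw [← Finset.sum_sub_distrib]
  rw [Finset.sum_eq_single i
    (fun j hj hne => by rw [(h i hi j hj (Ne.symm hne)).eq, sub_self]) (by simp_all)]

lemma pd_pd (v w : Fin n ⊕ Fin n) (p : PolyA n) :
    pderiv v (pderiv w p) = pderiv w (pderiv v p) := by
  classical
  induction p using MvPolynomial.induction_on' with
  | add p q hp hq => simp [hp, hq]
  | monomial s a =>
    rcases eq_or_ne v w with rfl | h
    · rfl
    · simp only [pderiv_monomial, Finsupp.tsub_apply, Finsupp.single_apply,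
        if_neg h, if_neg (Ne.symm h), tsub_zero, tsub_right_comm]
      ring_nf

lemma pd_swap (i j : Fin n) (p : PolyA n) :
    pderiv (Sum.inr i) (pderiv (Sum.inl j) p) = pderiv (Sum.inl j) (pderiv (Sum.inr i) p) :=
  pd_pd n _ _ p

lemma comm_mul_mul (v w : Fin n ⊕ Fin n) :
    Commute (LinearMap.mulLeft ℂ (X v : PolyA n)) (LinearMap.mulLeft ℂ (X w : PolyA n)) := by
  apply LinearMap.ext; intro p
  simp only [Module.End.mul_apply, LinearMap.mulLeft_apply]; ring

lemma comm_pd_pd (v w : Fin n ⊕ Fin n) :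
    Commute ((pderiv v : Derivation ℂ (PolyA n) (PolyA n)).toLinearMap)
      ((pderiv w : Derivation ℂ (PolyA n) (PolyA n)).toLinearMap) := by
  apply LinearMap.ext; intro p
  simpa using pd_pd n v w p

lemma comm_pd_mul (v w : Fin n ⊕ Fin n) (h : v ≠ w) :
    Commute ((pderiv v : Derivation ℂ (PolyA n) (PolyA n)).toLinearMap)
      (LinearMap.mulLeft ℂ (X w : PolyA n)) := by
  apply LinearMap.ext; intro p
  simp [Module.End.mul_apply, LinearMap.mulLeft_apply, pderiv_mul, pderiv_X_of_ne (Ne.symm h)]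

lemma comm_comp (f₁ f₂ g₁ g₂ : Module.End ℂ (PolyA n))
    (h11 : Commute f₁ g₁) (h12 : Commute f₁ g₂) (h21 : Commute f₂ g₁) (h22 : Commute f₂ g₂) :
    Commute (f₁ ∘ₗ f₂) (g₁ ∘ₗ g₂) := by
  simp only [← Module.End.mul_eq_comp]
  exact (h11.mul_right h12).mul_left (h21.mul_right h22)

lemma cross (m₁ m₂ : ℕ) {i j : Fin n} (hij : i ≠ j) :
    Commute
      (if i.val < m₁ then -(mx n i ∘ₗ pdy n i)
        else if i.val < m₂ then pdx n i ∘ₗ pdy n i else -(my n i ∘ₗ pdx n i))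
      (if j.val < m₁ then my n j ∘ₗ pdx n j
        else if j.val < m₂ then mx n j ∘ₗ my n j else mx n j ∘ₗ pdy n j) := by
  have hll : (Sum.inl i : Fin n ⊕ Fin n) ≠ Sum.inl j := fun h => hij (Sum.inl.inj h)
  have hrr : (Sum.inr i : Fin n ⊕ Fin n) ≠ Sum.inr j := fun h => hij (Sum.inr.inj h)
  have c1 : Commute (mx n i) (mx n j) := comm_mul_mul n _ _
  have c2 : Commute (mx n i) (my n j) := comm_mul_mul n _ _
  have c3 : Commute (my n i) (mx n j) := comm_mul_mul n _ _
  have c4 : Commute (my n i) (my n j) := comm_mul_mul n _ _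
  have c5 : Commute (pdx n i) (pdx n j) := comm_pd_pd n _ _
  have c6 : Commute (pdx n i) (pdy n j) := comm_pd_pd n _ _
  have c7 : Commute (pdy n i) (pdx n j) := comm_pd_pd n _ _
  have c8 : Commute (pdy n i) (pdy n j) := comm_pd_pd n _ _
  have c9 : Commute (pdx n i) (mx n j) := comm_pd_mul n _ _ hll
  have c10 : Commute (pdx n i) (my n j) := comm_pd_mul n _ _ Sum.inl_ne_inr
  have c11 : Commute (pdy n i) (mx n j) := comm_pd_mul n _ _ Sum.inr_ne_inl
  have c12 : Commute (pdy n i) (my n j) := comm_pd_mul n _ _ hrr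
  have c13 : Commute (mx n i) (pdx n j) := (comm_pd_mul n _ _ (Ne.symm hll)).symm
  have c14 : Commute (mx n i) (pdy n j) := (comm_pd_mul n _ _ Sum.inr_ne_inl).symm
  have c15 : Commute (my n i) (pdx n j) := (comm_pd_mul n _ _ Sum.inl_ne_inr).symm
  have c16 : Commute (my n i) (pdy n j) := (comm_pd_mul n _ _ (Ne.symm hrr)).symm
  split_ifs
  · exact (comm_comp n _ _ _ _ c2 c13 c12 c7).neg_left
  · exact (comm_comp n _ _ _ _ c1 c2 c11 c12).neg_left
  · exact (comm_comp n _ _ _ _ c1 c14 c11 c8).neg_left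
  · exact comm_comp n _ _ _ _ c10 c5 c12 c7
  · exact comm_comp n _ _ _ _ c9 c10 c11 c12
  · exact comm_comp n _ _ _ _ c9 c6 c11 c8
  · exact (comm_comp n _ _ _ _ c4 c15 c10 c5).neg_left
  · exact (comm_comp n _ _ _ _ c3 c4 c9 c10).neg_left
  · exact (comm_comp n _ _ _ _ c3 c16 c9 c6).neg_left

lemma case1 (i : Fin n) :
    (-(mx n i ∘ₗ pdy n i)) * (my n i ∘ₗ pdx n i) - (my n i ∘ₗ pdx n i) * (-(mx n i ∘ₗ pdy n i))
      = -(mx n i ∘ₗ pdx n i) + my n i ∘ₗ pdy n i := by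
  apply LinearMap.ext; intro p
  simp only [mx, my, pdx, pdy, xv, yv, Module.End.mul_apply, LinearMap.comp_apply,
    LinearMap.mulLeft_apply, Derivation.coeFn_coe, LinearMap.neg_apply,
    LinearMap.sub_apply, LinearMap.add_apply, map_neg, map_add, map_zero, pderiv_one,
    zero_mul, mul_zero, pderiv_mul, pderiv_X_self,
    pderiv_X_of_ne (Sum.inr_ne_inl (a := i) (b := i)),
    pderiv_X_of_ne (Sum.inl_ne_inr (a := i) (b := i)), pd_swap]
  ring

lemma case2 (i : Fin n) :
    (pdx n i ∘ₗ pdy n i) * (mx n i ∘ₗ my n i) - (mx n i ∘ₗ my n i) * (pdx n i ∘ₗ pdy n i)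
      = 1 + (mx n i ∘ₗ pdx n i) + my n i ∘ₗ pdy n i := by
  apply LinearMap.ext; intro p
  simp only [mx, my, pdx, pdy, xv, yv, Module.End.mul_apply, LinearMap.comp_apply,
    LinearMap.mulLeft_apply, Derivation.coeFn_coe, LinearMap.neg_apply,
    LinearMap.sub_apply, LinearMap.add_apply, Module.End.one_apply, map_neg, map_add,
    map_zero, pderiv_one, zero_mul, mul_zero, pderiv_mul, pderiv_X_self,
    pderiv_X_of_ne (Sum.inr_ne_inl (a := i) (b := i)),
    pderiv_X_of_ne (Sum.inl_ne_inr (a := i) (b := i)), pd_swap]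
  ring

lemma case3 (i : Fin n) :
    (-(my n i ∘ₗ pdx n i)) * (mx n i ∘ₗ pdy n i) - (mx n i ∘ₗ pdy n i) * (-(my n i ∘ₗ pdx n i))
      = (mx n i ∘ₗ pdx n i) + -(my n i ∘ₗ pdy n i) := by
  apply LinearMap.ext; intro p
  simp only [mx, my, pdx, pdy, xv, yv, Module.End.mul_apply, LinearMap.comp_apply,
    LinearMap.mulLeft_apply, Derivation.coeFn_coe, LinearMap.neg_apply,
    LinearMap.sub_apply, LinearMap.add_apply, map_neg, map_add, map_zero, pderiv_one,
    zero_mul, mul_zero, pderiv_mul, pderiv_X_self,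
    pderiv_X_of_ne (Sum.inr_ne_inl (a := i) (b := i)),
    pderiv_X_of_ne (Sum.inl_ne_inr (a := i) (b := i)), pd_swap]
  ring

variable (n₁ n₂ : ℕ)

/-- the twisted Laplace operator Δ̄ -/
def Δtw : Module.End ℂ (PolyA n) :=
  ∑ i : Fin n,
    if i.val < n₁ then -(mx n i ∘ₗ pdy n i)
    else if i.val < n₂ then pdx n i ∘ₗ pdy n i
    else -(my n i ∘ₗ pdx n i)

/-- the dual operator η̄ -/
def ηtw : Module.End ℂ (PolyA n) :=
  ∑ i : Fin n,
    if i.val < n₁ then my n i ∘ₗ pdx n i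
    else if i.val < n₂ then mx n i ∘ₗ my n i
    else mx n i ∘ₗ pdy n i

/-- ♭ = Σ_{r>n₁} x_r∂_{x_r} − Σ_{i≤n₁} x_i∂_{x_i} -/
def flat : Module.End ℂ (PolyA n) :=
  ∑ i : Fin n, if i.val < n₁ then -(mx n i ∘ₗ pdx n i) else mx n i ∘ₗ pdx n i

/-- ♭′ = Σ_{i≤n₂} y_i∂_{y_i} − Σ_{r>n₂} y_r∂_{y_r} -/
def flat' : Module.End ℂ (PolyA n) :=
  ∑ i : Fin n, if i.val < n₂ then my n i ∘ₗ pdy n i else -(my n i ∘ₗ pdy n i)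

lemma count_lemma (m₁ m₂ : ℕ) (h3 : m₂ ≤ n) (hle : m₁ ≤ m₂) :
    ∑ i : Fin n, (if i.val < m₁ then (0 : Module.End ℂ (PolyA n)) else if i.val < m₂ then 1 else 0)
      = ((m₂ : ℂ) - (m₁ : ℂ)) • 1 := by
  rw [Fin.sum_univ_eq_sum_range
    (fun k => if k < m₁ then (0 : Module.End ℂ (PolyA n)) else if k < m₂ then 1 else 0)]
  have key : ∀ k, (if k < m₁ then (0 : Module.End ℂ (PolyA n)) else if k < m₂ then 1 else 0)
      = if m₁ ≤ k ∧ k < m₂ then 1 else 0 := by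
    intro k; split_ifs <;> first | rfl | omega
  simp_rw [key]
  rw [← Finset.sum_filter]
  have hf : (Finset.range n).filter (fun k => m₁ ≤ k ∧ k < m₂) = Finset.Ico m₁ m₂ := by
    ext k; simp; omega
  rw [hf, Finset.sum_const, Nat.card_Ico, ← Nat.cast_smul_eq_nsmul ℂ, Nat.cast_sub hle]

theorem twisted_commutator (h₁ : 1 ≤ n₁) (h₂ : n₁ + 1 < n₂) (h₃ : n₂ ≤ n) :
    Δtw n n₁ n₂ ∘ₗ ηtw n n₁ n₂ - ηtw n n₁ n₂ ∘ₗ Δtw n n₁ n₂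
      = ((n₂ : ℂ) - (n₁ : ℂ)) • (1 : Module.End ℂ (PolyA n))
        + flat n n₁ + flat' n n₂ := by
  classical
  have hle : n₁ ≤ n₂ := by omega
  rw [← Module.End.mul_eq_comp, ← Module.End.mul_eq_comp]
  unfold Δtw ηtw
  rw [sum_commutator _ _ _ (fun i _ j _ hij => cross n n₁ n₂ hij)]
  have key : ∀ i : Fin n,
      ((if i.val < n₁ then -(mx n i ∘ₗ pdy n i)
        else if i.val < n₂ then pdx n i ∘ₗ pdy n i else -(my n i ∘ₗ pdx n i)) *
       (if i.val < n₁ then my n i ∘ₗ pdx n i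
        else if i.val < n₂ then mx n i ∘ₗ my n i else mx n i ∘ₗ pdy n i) -
       (if i.val < n₁ then my n i ∘ₗ pdx n i
        else if i.val < n₂ then mx n i ∘ₗ my n i else mx n i ∘ₗ pdy n i) *
       (if i.val < n₁ then -(mx n i ∘ₗ pdy n i)
        else if i.val < n₂ then pdx n i ∘ₗ pdy n i else -(my n i ∘ₗ pdx n i)))
      = (if i.val < n₁ then (0 : Module.End ℂ (PolyA n)) else if i.val < n₂ then 1 else 0)
        + (if i.val < n₁ then -(mx n i ∘ₗ pdx n i) else mx n i ∘ₗ pdx n i)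
        + (if i.val < n₂ then my n i ∘ₗ pdy n i else -(my n i ∘ₗ pdy n i)) := by
    intro i
    split_ifs with hA hB
    · rw [case1]; abel
    · omega
    · rw [case2]
    · rw [case3]; abel
  rw [Finset.sum_congr rfl (fun i _ => key i), Finset.sum_add_distrib, Finset.sum_add_distrib,
    count_lemma n n₁ n₂ h₃ hle]
  rfl
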